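/- arXiv:1801.10576 — 3 statements merged into one kernel-verified Lean document; each statement's English description precedes it below -/
import Mathlib

section
/- (Density version of Sklar's theorem.) Let μ be a Borel probability measure on ℝ^d with Lebesgue density f. Suppose that for each j = 1, …, d the j-th marginal density f_j is continuous and strictly positive on ℝ, and let F_j(z) = ∫_{-∞}^z f_j(s) ds be the j-th marginal distribution function, so that each F_j is a strictly increasing C¹ bijection from ℝ onto (0,1). Let T : ℝ^d → (0,1)^d be given by T(z) = (F_1(z_1), …, F_d(z_d)). Then the pushforward measure T_*μ (the law of the vector of probability integral transforms) is absolutely continuous with respect to Lebesgue measure on (0,1)^d, and any density c of T_*μ satisfies f(z) = c(F_1(z_1), …, F_d(z_d)) · ∏_{j=1}^d f_j(z_j) for Lebesgue-almost every z ∈ ℝ^d. -/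
open MeasureTheory

/-- Density version of Sklar's theorem.  The vector of probability integral
transforms has an absolutely continuous law, and any of its densities `c` (the copula
density) factorizes the joint density as the copula density composed with the marginal
distribution functions times the product of marginal densities. -/
theorem sklar_density {d : ℕ}
    (μ : Measure (Fin d → ℝ)) [IsProbabilityMeasure μ]
    (f : (Fin d → ℝ) → ℝ) (hf_meas : Measurable f) (hf_nonneg : ∀ z, 0 ≤ f z)
    (hμ : μ = volume.withDensity (fun z => ENNReal.ofReal (f z)))
    (fm : Fin d → ℝ → ℝ)
    (hfm_cont : ∀ j, Continuous (fm j))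
    (hfm_pos : ∀ j s, 0 < fm j s)
    (hfm_density : ∀ j, μ.map (fun z => z j) =
      volume.withDensity (fun s => ENNReal.ofReal (fm j s)))
    (F : Fin d → ℝ → ℝ)
    (hF : ∀ j z, F j z = ∫ s in Set.Iic z, fm j s)
    (T : (Fin d → ℝ) → (Fin d → ℝ))
    (hT : ∀ z j, T z j = F j (z j)) :
    μ.map T ≪ (volume : Measure (Fin d → ℝ)) ∧
    ∀ c : (Fin d → ℝ) → ℝ, Measurable c → (∀ u, 0 ≤ c u) →
      μ.map T = volume.withDensity (fun u => ENNReal.ofReal (c u)) →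
      ∀ᵐ z ∂(volume : Measure (Fin d → ℝ)),
        f z = c (T z) * ∏ j, fm j (z j) := by
  classical
  -- integrability of the marginal densities
  have hfm_meas : ∀ j, Measurable (fm j) := fun j => (hfm_cont j).measurable
  have hfm_lint : ∀ j, ∫⁻ s, ENNReal.ofReal (fm j s) ∂(volume : Measure ℝ) = 1 := by
    intro j
    have h2 : (μ.map (fun z => z j)) Set.univ = 1 := by
      rw [Measure.map_apply (measurable_pi_apply j) MeasurableSet.univ]
      simp
    rw [hfm_density j] at h2
    rwa [withDensity_apply _ MeasurableSet.univ, Measure.restrict_univ] at h2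
  have hfm_int : ∀ j, Integrable (fm j) (volume : Measure ℝ) := by
    intro j
    refine ⟨(hfm_cont j).aestronglyMeasurable, ?_⟩
    rw [HasFiniteIntegral]
    have : ∀ s : ℝ, ‖fm j s‖ₑ = ENNReal.ofReal (fm j s) := fun s => by
      rw [← Real.enorm_eq_ofReal (hfm_pos j s).le]
    rw [lintegral_congr this, hfm_lint j]
    exact ENNReal.one_lt_top
  -- fundamental theorem of calculus: F j has derivative fm j
  have hF_deriv : ∀ j x, HasDerivAt (F j) (fm j x) x := by
    intro j x
    have hInt : ∀ y : ℝ, IntegrableOn (fm j) (Set.Iic y) (volume : Measure ℝ) :=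
      fun y => (hfm_int j).integrableOn
    have h0 : ∀ y, F j y = (∫ t in (0:ℝ)..y, fm j t) + F j 0 := by
      intro y
      rw [hF, hF, ← intervalIntegral.integral_Iic_sub_Iic (hInt 0) (hInt y)]
      ring
    have hder : HasDerivAt (fun y => (∫ t in (0:ℝ)..y, fm j t) + F j 0) (fm j x) x := by
      have h1 := intervalIntegral.integral_hasDerivAt_right (a := (0:ℝ)) (b := x)
        ((hfm_int j).intervalIntegrable)
        ((hfm_cont j).stronglyMeasurable.stronglyMeasurableAtFilter)
        ((hfm_cont j).continuousAt)
      exact h1.add_const _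
    have : F j = fun y => (∫ t in (0:ℝ)..y, fm j t) + F j 0 := funext h0
    rw [this]
    exact hder
  have hF_mono : ∀ j, StrictMono (F j) :=
    fun j => strictMono_of_hasDerivAt_pos (hF_deriv j) (hfm_pos j)
  have hF_cont : ∀ j, Continuous (F j) := by
    intro j
    have : Differentiable ℝ (F j) := fun x => (hF_deriv j x).differentiableAt
    exact this.continuous
  have hTfun : T = fun z j => F j (z j) := funext fun z => funext (hT z)
  subst hTfun
  set T : (Fin d → ℝ) → (Fin d → ℝ) := fun z j => F j (z j) with hTdef
  have hT_cont : Continuous T :=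
    continuous_pi fun j => (hF_cont j).comp (continuous_apply j)
  have hT_meas : Measurable T := hT_cont.measurable
  have hT_inj : Function.Injective T := by
    intro z w h
    funext j
    exact (hF_mono j).injective (congrFun h j)
  have hTemb : MeasurableEmbedding T := hT_cont.measurableEmbedding hT_inj
  -- the derivative of T
  set L : (Fin d → ℝ) → ((Fin d → ℝ) →L[ℝ] (Fin d → ℝ)) :=
    fun z => ContinuousLinearMap.pi (fun j => fm j (z j) • ContinuousLinearMap.proj j) with hLdef
  have hL : ∀ z, HasFDerivAt T (L z) z := by
    intro z
    apply hasFDerivAt_pi.2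
    intro j
    have h1 : HasFDerivAt (F j)
        (ContinuousLinearMap.smulRight (1 : ℝ →L[ℝ] ℝ) (fm j (z j))) (z j) :=
      (hF_deriv j (z j)).hasFDerivAt
    have h2 := h1.comp z (hasFDerivAt_apply (𝕜 := ℝ) j z)
    have h3 : (ContinuousLinearMap.smulRight (1 : ℝ →L[ℝ] ℝ) (fm j (z j))).comp
        (ContinuousLinearMap.proj (R := ℝ) (φ := fun _ : Fin d => ℝ) j)
        = fm j (z j) • ContinuousLinearMap.proj j := by
      ext v
      simp [mul_comm]
    rwa [h3] at h2
  -- the determinant of the derivative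
  have hprod_pos : ∀ z : Fin d → ℝ, 0 < ∏ j, fm j (z j) :=
    fun z => Finset.prod_pos fun j _ => hfm_pos j (z j)
  have hdet : ∀ z, (L z).det = ∏ j, fm j (z j) := by
    intro z
    have hmat : LinearMap.toMatrix (Pi.basisFun ℝ (Fin d)) (Pi.basisFun ℝ (Fin d))
        (L z : (Fin d → ℝ) →ₗ[ℝ] (Fin d → ℝ)) = Matrix.diagonal (fun j => fm j (z j)) := by
      ext i j
      rw [LinearMap.toMatrix_apply]
      simp [hLdef, Matrix.diagonal, Pi.single_apply]
    rw [ContinuousLinearMap.det, ← LinearMap.det_toMatrix (Pi.basisFun ℝ (Fin d)), hmat,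
      Matrix.det_diagonal]
  -- the density of the product of marginals
  set D : (Fin d → ℝ) → ENNReal := fun z => ENNReal.ofReal (∏ j, fm j (z j)) with hDdef
  have hD_meas : Measurable D := by
    apply Measurable.ennreal_ofReal
    exact Finset.measurable_prod _ fun j _ => (hfm_meas j).comp (measurable_pi_apply j)
  set ν : Measure (Fin d → ℝ) := volume.withDensity D with hνdef
  -- change of variables
  have hmapν : Measure.map T ν = volume.restrict (Set.range T) := by
    have h := map_withDensity_abs_det_fderiv_eq_addHaar (volume : Measure (Fin d → ℝ))
      MeasurableSet.univ.nullMeasurableSet (fun x _ => (hL x).hasFDerivWithinAt) (hT_inj.injOn)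
    rw [Measure.restrict_univ, Set.image_univ] at h
    have hfun : (fun x => ENNReal.ofReal |(L x).det|) = D := by
      funext x
      rw [hdet x, abs_of_pos (hprod_pos x)]
    rwa [hfun] at h
  have hvol_ac : (volume : Measure (Fin d → ℝ)) ≪ ν :=
    withDensity_absolutelyContinuous' hD_meas.aemeasurable
      (Filter.Eventually.of_forall fun z =>
        ne_of_gt (ENNReal.ofReal_pos.2 (hprod_pos z)))
  have hμ_ac : μ ≪ ν := by
    rw [hμ]
    exact (withDensity_absolutelyContinuous _ _).trans hvol_ac
  have part1 : μ.map T ≪ (volume : Measure (Fin d → ℝ)) := by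
    have h1 : μ.map T ≪ Measure.map T ν := hμ_ac.map hT_meas
    rw [hmapν] at h1
    exact h1.trans (Measure.absolutelyContinuous_of_le Measure.restrict_le_self)
  refine ⟨part1, ?_⟩
  intro c hc_meas hc_nonneg hc_eq
  have hrange_meas : MeasurableSet (Set.range T) := hTemb.measurableSet_range
  have hmaprestrict : (μ.map T).restrict (Set.range T) = μ.map T := by
    apply Measure.restrict_eq_self_of_ae_mem
    rw [hTemb.ae_map_iff]
    exact Filter.Eventually.of_forall fun z => Set.mem_range_self z
  -- key computation
  have key : Measure.map T (ν.withDensity (fun z => ENNReal.ofReal (c (T z)))) = μ.map T := by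
    have hcT : Measurable fun u => ENNReal.ofReal (c u) := hc_meas.ennreal_ofReal
    ext A hA
    rw [Measure.map_apply hT_meas hA, withDensity_apply _ (hT_meas hA),
      ← setLIntegral_map hA hcT hT_meas, hmapν, ← withDensity_apply _ hA,
      ← restrict_withDensity hrange_meas, ← hc_eq, hmaprestrict]
  have hρμ : ν.withDensity (fun z => ENNReal.ofReal (c (T z))) = μ := by
    have h2 := congrArg (Measure.comap T) key
    rwa [hTemb.comap_map, hTemb.comap_map] at h2
  have hcomb : volume.withDensity (D * fun z => ENNReal.ofReal (c (T z)))
      = volume.withDensity (fun z => ENNReal.ofReal (f z)) := by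
    have hg : Measurable fun z => ENNReal.ofReal (c (T z)) :=
      (hc_meas.comp hT_meas).ennreal_ofReal
    rw [withDensity_mul _ hD_meas hg, ← hνdef, hρμ, hμ]
  have hae := (withDensity_eq_iff_of_sigmaFinite
    (hD_meas.mul ((hc_meas.comp hT_meas).ennreal_ofReal :
      Measurable fun z => ENNReal.ofReal (c (T z)))).aemeasurable
    hf_meas.ennreal_ofReal.aemeasurable).1 hcomb
  filter_upwards [hae] with z hz
  have hz' : ENNReal.ofReal ((∏ j, fm j (z j)) * c (T z)) = ENNReal.ofReal (f z) := by
    rw [ENNReal.ofReal_mul (hprod_pos z).le]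
    exact hz
  have h3 : (∏ j, fm j (z j)) * c (T z) = f z :=
    (ENNReal.ofReal_eq_ofReal_iff
      (mul_nonneg (hprod_pos z).le (hc_nonneg _)) (hf_nonneg z)).1 hz'
  rw [← h3]; ring
end

section
/- (One-parameter exponential family: strict convexity of the log-partition function and identifiability.) Let μ be a σ-finite measure, a a real-valued measurable function, and suppose L(θ) = ∫ exp{θ·a(y)} dμ(y) is finite for all θ in a nonempty open interval I ⊆ ℝ; let b(θ) = log L(θ) and f(y; θ) = exp{a(y)θ − b(θ)}. Then b is twice differentiable on I with b″(θ) = ∫ {a(y) − b′(θ)}² f(y; θ) dμ(y) ≥ 0, i.e., b″(θ) equals the variance of a(Y) when Y has density f(·; θ) with respect to μ. If a is not μ-almost everywhere constant, then b″(θ) > 0 for all θ ∈ I, so b′ is strictly increasing on I and for each θ₀ ∈ I the root of the estimating equation ∫ {a(y) − b′(θ)} f(y; θ₀) dμ(y) = 0 in θ ∈ I is unique and equals θ₀. -/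
open MeasureTheory

lemma expfam_exp_bound {θ δ s t : ℝ} (h1 : θ - 2*δ ≤ s) (h2 : s ≤ θ + 2*δ) :
    Real.exp (s * t) ≤ Real.exp ((θ - 2*δ) * t) + Real.exp ((θ + 2*δ) * t) := by
  rcases le_total t 0 with ht | ht
  · calc Real.exp (s*t) ≤ Real.exp ((θ-2*δ)*t) :=
        Real.exp_le_exp.2 (mul_le_mul_of_nonpos_right h1 ht)
    _ ≤ _ := le_add_of_nonneg_right (Real.exp_pos _).le
  · calc Real.exp (s*t) ≤ Real.exp ((θ+2*δ)*t) :=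
        Real.exp_le_exp.2 (mul_le_mul_of_nonneg_right h2 ht)
    _ ≤ _ := le_add_of_nonneg_left (Real.exp_pos _).le

lemma expfam_abs_bound {θ δ x t : ℝ} (hδ : 0 < δ) (hx : |x - θ| < δ) :
    |t| * Real.exp (x * t) ≤ δ⁻¹ * (Real.exp ((θ - 2*δ) * t) + Real.exp ((θ + 2*δ) * t)) := by
  rw [abs_lt] at hx
  have key : Real.exp (δ * |t| + x * t)
      ≤ Real.exp ((θ - 2*δ) * t) + Real.exp ((θ + 2*δ) * t) := by
    rcases le_total 0 t with ht | ht
    · have h : δ * |t| + x * t = (x + δ) * t := by rw [abs_of_nonneg ht]; ring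
      rw [h]; exact expfam_exp_bound (by linarith) (by linarith)
    · have h : δ * |t| + x * t = (x - δ) * t := by rw [abs_of_nonpos ht]; ring
      rw [h]; exact expfam_exp_bound (by linarith) (by linarith)
  have h1 : δ * |t| ≤ Real.exp (δ * |t|) := by
    linarith [Real.add_one_le_exp (δ * |t|)]
  calc |t| * Real.exp (x * t) = δ⁻¹ * ((δ * |t|) * Real.exp (x * t)) := by
        field_simp
    _ ≤ δ⁻¹ * (Real.exp (δ * |t|) * Real.exp (x * t)) := by
        have := mul_le_mul_of_nonneg_right h1 (Real.exp_pos (x*t)).le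
        exact mul_le_mul_of_nonneg_left this (inv_nonneg.2 hδ.le)
    _ = δ⁻¹ * Real.exp (δ * |t| + x * t) := by rw [Real.exp_add]
    _ ≤ _ := mul_le_mul_of_nonneg_left key (inv_nonneg.2 hδ.le)

lemma expfam_sq_bound {θ δ x t : ℝ} (hδ : 0 < δ) (hx : |x - θ| < δ) :
    t^2 * Real.exp (x * t) ≤ (4 * δ⁻¹^2) * (Real.exp ((θ - 2*δ) * t) + Real.exp ((θ + 2*δ) * t)) := by
  rw [abs_lt] at hx
  have key : Real.exp (δ * |t| + x * t)
      ≤ Real.exp ((θ - 2*δ) * t) + Real.exp ((θ + 2*δ) * t) := by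
    rcases le_total 0 t with ht | ht
    · have h : δ * |t| + x * t = (x + δ) * t := by rw [abs_of_nonneg ht]; ring
      rw [h]; exact expfam_exp_bound (by linarith) (by linarith)
    · have h : δ * |t| + x * t = (x - δ) * t := by rw [abs_of_nonpos ht]; ring
      rw [h]; exact expfam_exp_bound (by linarith) (by linarith)
  have h1 : δ * |t| / 2 ≤ Real.exp (δ * |t| / 2) := by
    linarith [Real.add_one_le_exp (δ * |t| / 2)]
  have h2 : (δ * |t| / 2)^2 ≤ Real.exp (δ * |t|) := by
    have := mul_self_le_mul_self (by positivity) h1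
    calc (δ * |t| / 2)^2 = (δ*|t|/2) * (δ*|t|/2) := sq (δ*|t|/2) ▸ by ring
    _ ≤ Real.exp (δ*|t|/2) * Real.exp (δ*|t|/2) := this
    _ = Real.exp (δ * |t|) := by rw [← Real.exp_add]; ring_nf
  have ht2 : t^2 ≤ 4 * δ⁻¹^2 * Real.exp (δ * |t|) := by
    have h3 : δ^2 * t^2 / 4 ≤ Real.exp (δ * |t|) := by
      calc δ^2 * t^2 / 4 = (δ * |t| / 2)^2 := by
            rw [div_pow, mul_pow, sq_abs]; ring
      _ ≤ _ := h2
    have h4 : 4 * δ⁻¹^2 * (δ^2 * t^2 / 4) = t^2 := by field_simp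
    calc t^2 = 4 * δ⁻¹^2 * (δ^2 * t^2 / 4) := h4.symm
    _ ≤ 4 * δ⁻¹^2 * Real.exp (δ * |t|) := mul_le_mul_of_nonneg_left h3 (by positivity)
  calc t^2 * Real.exp (x * t) ≤ (4 * δ⁻¹^2 * Real.exp (δ * |t|)) * Real.exp (x * t) :=
        mul_le_mul_of_nonneg_right ht2 (Real.exp_pos _).le
    _ = (4 * δ⁻¹^2) * Real.exp (δ * |t| + x * t) := by rw [Real.exp_add]; ring
    _ ≤ _ := mul_le_mul_of_nonneg_left key (by positivity)

lemma expfam_D1 {α : Type*} [MeasurableSpace α] (μ : Measure α)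
    (a : α → ℝ) (ha : Measurable a) {θ δ : ℝ} (hδ : 0 < δ)
    (h0 : Integrable (fun y => Real.exp (θ * a y)) μ)
    (h1 : Integrable (fun y => Real.exp ((θ - 2*δ) * a y)) μ)
    (h2 : Integrable (fun y => Real.exp ((θ + 2*δ) * a y)) μ) :
    Integrable (fun y => a y * Real.exp (θ * a y)) μ ∧
    HasDerivAt (fun x => ∫ y, Real.exp (x * a y) ∂μ)
      (∫ y, a y * Real.exp (θ * a y) ∂μ) θ := by
  exact hasDerivAt_integral_of_dominated_loc_of_deriv_le (𝕜 := ℝ)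
    (F := fun x y => Real.exp (x * a y))
    (F' := fun x y => a y * Real.exp (x * a y))
    (bound := fun y => δ⁻¹ * (Real.exp ((θ - 2*δ) * a y) + Real.exp ((θ + 2*δ) * a y)))
    (Metric.ball_mem_nhds θ hδ)
    (Filter.Eventually.of_forall fun x =>
      ((Real.measurable_exp.comp (measurable_const.mul ha)).aestronglyMeasurable))
    h0
    ((ha.mul (Real.measurable_exp.comp (measurable_const.mul ha))).aestronglyMeasurable)
    (Filter.Eventually.of_forall fun y x hx => by
      rw [Real.norm_eq_abs, abs_mul, Real.abs_exp]
      exact expfam_abs_bound hδ (by rwa [Metric.mem_ball, Real.dist_eq] at hx))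
    ((h1.add h2).const_mul _)
    (Filter.Eventually.of_forall fun y x hx => by
      simpa [mul_comm] using (hasDerivAt_mul_const (a y) (x := x)).exp)

set_option maxHeartbeats 1000000 in
lemma expfam_D2 {α : Type*} [MeasurableSpace α] (μ : Measure α)
    (a : α → ℝ) (ha : Measurable a) {θ δ : ℝ} (hδ : 0 < δ)
    (h0 : Integrable (fun y => a y * Real.exp (θ * a y)) μ)
    (h1 : Integrable (fun y => Real.exp ((θ - 2*δ) * a y)) μ)
    (h2 : Integrable (fun y => Real.exp ((θ + 2*δ) * a y)) μ) :
    Integrable (fun y => a y ^ 2 * Real.exp (θ * a y)) μ ∧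
    HasDerivAt (fun x => ∫ y, a y * Real.exp (x * a y) ∂μ)
      (∫ y, a y ^ 2 * Real.exp (θ * a y) ∂μ) θ := by
  have hdiff : ∀ y : α, ∀ x : ℝ,
      HasDerivAt (fun x => a y * Real.exp (x * a y)) (a y ^ 2 * Real.exp (x * a y)) x := by
    intro y x
    have h := ((hasDerivAt_mul_const (a y) (x := x)).exp).const_mul (a y)
    have he : a y * (Real.exp (x * a y) * a y) = a y ^ 2 * Real.exp (x * a y) := by ring
    rwa [he] at h
  have hbnd : ∀ y : α, ∀ x ∈ Metric.ball θ δ,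
      ‖a y ^ 2 * Real.exp (x * a y)‖ ≤
        (4 * δ⁻¹^2) * (Real.exp ((θ - 2*δ) * a y) + Real.exp ((θ + 2*δ) * a y)) := by
    intro y x hx
    rw [Real.norm_of_nonneg (by positivity)]
    exact expfam_sq_bound hδ (by rwa [Metric.mem_ball, Real.dist_eq] at hx)
  exact hasDerivAt_integral_of_dominated_loc_of_deriv_le (𝕜 := ℝ) (x₀ := θ)
    (F := fun x y => a y * Real.exp (x * a y))
    (F' := fun x y => a y ^ 2 * Real.exp (x * a y))
    (bound := fun y => (4 * δ⁻¹^2) * (Real.exp ((θ - 2*δ) * a y) + Real.exp ((θ + 2*δ) * a y)))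
    (Metric.ball_mem_nhds θ hδ)
    (Filter.Eventually.of_forall fun x =>
      ((ha.mul (Real.measurable_exp.comp (measurable_const.mul ha))).aestronglyMeasurable))
    h0
    (((ha.pow_const 2).mul (Real.measurable_exp.comp (measurable_const.mul ha))).aestronglyMeasurable)
    (Filter.Eventually.of_forall fun y => hbnd y)
    ((h1.add h2).const_mul _)
    (Filter.Eventually.of_forall fun y x _ => hdiff y x)


/-- In a one-parameter exponential family, the log-partition function `b`
is twice differentiable with `b''(θ) = ∫ (a(y) - b'(θ))² f(y; θ) dμ(y) ≥ 0` (the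
variance of the sufficient statistic).  If `a` is not `μ`-a.e. constant, then
`b''(θ) > 0` on `I`, `b'` is strictly increasing on `I`, and for each `θ₀ ∈ I` the root
in `θ ∈ I` of the estimating equation `∫ (a(y) - b'(θ)) f(y; θ₀) dμ(y) = 0` is unique
and equals `θ₀`. -/
theorem exponential_family_identifiability
    {α : Type*} [MeasurableSpace α] (μ : Measure α) [SigmaFinite μ]
    (a : α → ℝ) (ha : Measurable a)
    (I : Set ℝ) (hI_open : IsOpen I) (hI_ne : I.Nonempty) (hI_conn : I.OrdConnected)
    (hL : ∀ θ ∈ I, Integrable (fun y => Real.exp (θ * a y)) μ)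
    (b : ℝ → ℝ) (hb : ∀ θ, b θ = Real.log (∫ y, Real.exp (θ * a y) ∂μ))
    (f : α → ℝ → ℝ) (hf : ∀ y θ, f y θ = Real.exp (a y * θ - b θ)) :
    (∀ θ ∈ I,
      DifferentiableAt ℝ b θ ∧
      HasDerivAt (deriv b) (∫ y, (a y - deriv b θ) ^ 2 * f y θ ∂μ) θ ∧
      0 ≤ ∫ y, (a y - deriv b θ) ^ 2 * f y θ ∂μ) ∧
    ((¬ ∃ c : ℝ, ∀ᵐ y ∂μ, a y = c) →
      (∀ θ ∈ I, 0 < ∫ y, (a y - deriv b θ) ^ 2 * f y θ ∂μ) ∧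
      StrictMonoOn (deriv b) I ∧
      (∀ θ₀ ∈ I, ∀ θ ∈ I,
        (∫ y, (a y - deriv b θ) * f y θ₀ ∂μ) = 0 → θ = θ₀)) := by
  have hbfun : b = fun θ => Real.log (∫ y, Real.exp (θ * a y) ∂μ) := funext hb
  subst hbfun
  simp only [hf]
  rcases eq_or_ne μ 0 with hμ | hμ
  · subst hμ
    have h0 : (fun θ => Real.log (∫ y, Real.exp (θ * a y) ∂(0 : Measure α)))
        = fun _ => (0:ℝ) := by funext x; simp
    rw [h0]
    constructor
    · intro θ hθ
      refine ⟨differentiableAt_const _, ?_, ?_⟩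
      · simp only [deriv_const', integral_zero_measure]
        exact hasDerivAt_const θ 0
      · simp
    · intro hc
      exact absurd ⟨0, by simp⟩ hc
  · haveI : NeZero μ := ⟨hμ⟩
    -- key differentiability facts
    have key : ∀ x ∈ I, Integrable (fun y => a y * Real.exp (x * a y)) μ ∧
        Integrable (fun y => a y ^ 2 * Real.exp (x * a y)) μ ∧
        HasDerivAt (fun t => ∫ y, Real.exp (t * a y) ∂μ)
          (∫ y, a y * Real.exp (x * a y) ∂μ) x ∧
        HasDerivAt (fun t => ∫ y, a y * Real.exp (t * a y) ∂μ)
          (∫ y, a y ^ 2 * Real.exp (x * a y) ∂μ) x := by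
      intro x hx
      obtain ⟨ε, hε, hball⟩ := Metric.isOpen_iff.1 hI_open x hx
      have hδ : 0 < ε / 5 := by positivity
      have hmem : ∀ s : ℝ, |s - x| ≤ 2 * (ε/5) → s ∈ I := by
        intro s hs; apply hball; rw [Metric.mem_ball, Real.dist_eq]
        calc |s - x| ≤ 2 * (ε/5) := hs
        _ < ε := by linarith
      have h1 : Integrable (fun y => Real.exp ((x - 2*(ε/5)) * a y)) μ := by
        apply hL; apply hmem
        have h : (x - 2*(ε/5)) - x = -(2*(ε/5)) := by ring
        rw [h, abs_neg, abs_of_nonneg (by positivity)]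
      have h2 : Integrable (fun y => Real.exp ((x + 2*(ε/5)) * a y)) μ := by
        apply hL; apply hmem
        have h : (x + 2*(ε/5)) - x = 2*(ε/5) := by ring
        rw [h, abs_of_nonneg (by positivity)]
      obtain ⟨hi1, hd1⟩ := expfam_D1 μ a ha hδ (hL x hx) h1 h2
      obtain ⟨hi2, hd2⟩ := expfam_D2 μ a ha hδ hi1 h1 h2
      exact ⟨hi1, hi2, hd1, hd2⟩
    have hLpos : ∀ x ∈ I, 0 < ∫ y, Real.exp (x * a y) ∂μ :=
      fun x hx => integral_exp_pos (hL x hx)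
    set Bl : ℝ → ℝ := fun t => Real.log (∫ y, Real.exp (t * a y) ∂μ) with hBl
    have hbD : ∀ x ∈ I, HasDerivAt Bl
        ((∫ y, a y * Real.exp (x * a y) ∂μ) / (∫ y, Real.exp (x * a y) ∂μ)) x :=
      fun x hx => ((key x hx).2.2.1).log (hLpos x hx).ne'
    have hderiv_eq : ∀ x ∈ I, deriv Bl x
        = (∫ y, a y * Real.exp (x * a y) ∂μ) / (∫ y, Real.exp (x * a y) ∂μ) :=
      fun x hx => (hbD x hx).deriv
    have hDD : ∀ x ∈ I, HasDerivAt
        (fun t => (∫ y, a y * Real.exp (t * a y) ∂μ) / (∫ y, Real.exp (t * a y) ∂μ))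
        (((∫ y, a y ^ 2 * Real.exp (x * a y) ∂μ) * (∫ y, Real.exp (x * a y) ∂μ)
          - (∫ y, a y * Real.exp (x * a y) ∂μ) * (∫ y, a y * Real.exp (x * a y) ∂μ))
          / (∫ y, Real.exp (x * a y) ∂μ) ^ 2) x :=
      fun x hx => ((key x hx).2.2.2).div ((key x hx).2.2.1) (hLpos x hx).ne'
    have hb2 : ∀ θ ∈ I, HasDerivAt (deriv Bl)
        (((∫ y, a y ^ 2 * Real.exp (θ * a y) ∂μ) * (∫ y, Real.exp (θ * a y) ∂μ)
          - (∫ y, a y * Real.exp (θ * a y) ∂μ) * (∫ y, a y * Real.exp (θ * a y) ∂μ))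
          / (∫ y, Real.exp (θ * a y) ∂μ) ^ 2) θ := by
      intro θ hθ
      apply (hDD θ hθ).congr_of_eventuallyEq
      filter_upwards [hI_open.mem_nhds hθ] with x hx
      exact hderiv_eq x hx
    have hexpI : ∀ θ ∈ I, ∀ y,
        Real.exp (a y * θ - Bl θ)
          = Real.exp (θ * a y) * (∫ y, Real.exp (θ * a y) ∂μ)⁻¹ := by
      intro θ hθ y
      rw [hBl]
      rw [Real.exp_sub, Real.exp_log (hLpos θ hθ), mul_comm (a y) θ, div_eq_mul_inv]
    have hcomp : ∀ θ ∈ I, ∀ m : ℝ,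
        (∫ y, (a y - m) ^ 2 * Real.exp (a y * θ - Bl θ) ∂μ)
          = ((∫ y, a y ^ 2 * Real.exp (θ * a y) ∂μ)
              - 2 * m * (∫ y, a y * Real.exp (θ * a y) ∂μ)
              + m ^ 2 * (∫ y, Real.exp (θ * a y) ∂μ))
            * (∫ y, Real.exp (θ * a y) ∂μ)⁻¹ := by
      intro θ hθ m
      calc (∫ y, (a y - m) ^ 2 * Real.exp (a y * θ - Bl θ) ∂μ)
          = ∫ y, (a y ^ 2 * Real.exp (θ * a y)
              - 2 * m * (a y * Real.exp (θ * a y))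
              + m ^ 2 * Real.exp (θ * a y)) * (∫ y, Real.exp (θ * a y) ∂μ)⁻¹ ∂μ := by
            refine integral_congr_ae (Filter.Eventually.of_forall fun y => ?_)
            simp only [hexpI θ hθ]; ring
        _ = (∫ y, (a y ^ 2 * Real.exp (θ * a y)
              - 2 * m * (a y * Real.exp (θ * a y))
              + m ^ 2 * Real.exp (θ * a y)) ∂μ) * (∫ y, Real.exp (θ * a y) ∂μ)⁻¹ :=
            integral_mul_const _ _
        _ = _ := by
            have hint1 : Integrable (fun y => a y ^ 2 * Real.exp (θ * a y)
                - 2 * m * (a y * Real.exp (θ * a y))) μ :=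
              ((key θ hθ).2.1).sub (((key θ hθ).1).const_mul _)
            have hint2 : Integrable (fun y => m ^ 2 * Real.exp (θ * a y)) μ :=
              (hL θ hθ).const_mul _
            have hint3 : Integrable (fun y => 2 * m * (a y * Real.exp (θ * a y))) μ :=
              ((key θ hθ).1).const_mul _
            rw [integral_add hint1 hint2,
              integral_sub ((key θ hθ).2.1) hint3,
              integral_const_mul, integral_const_mul]
    have hcomp1 : ∀ θ ∈ I, ∀ m : ℝ,
        (∫ y, (a y - m) * Real.exp (a y * θ - Bl θ) ∂μ)
          = ((∫ y, a y * Real.exp (θ * a y) ∂μ)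
              - m * (∫ y, Real.exp (θ * a y) ∂μ))
            * (∫ y, Real.exp (θ * a y) ∂μ)⁻¹ := by
      intro θ hθ m
      calc (∫ y, (a y - m) * Real.exp (a y * θ - Bl θ) ∂μ)
          = ∫ y, (a y * Real.exp (θ * a y)
              - m * Real.exp (θ * a y)) * (∫ y, Real.exp (θ * a y) ∂μ)⁻¹ ∂μ := by
            refine integral_congr_ae (Filter.Eventually.of_forall fun y => ?_)
            simp only [hexpI θ hθ]; ring
        _ = (∫ y, (a y * Real.exp (θ * a y) - m * Real.exp (θ * a y)) ∂μ)
            * (∫ y, Real.exp (θ * a y) ∂μ)⁻¹ := integral_mul_const _ _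
        _ = _ := by
            have hint4 : Integrable (fun y => m * Real.exp (θ * a y)) μ :=
              (hL θ hθ).const_mul _
            rw [integral_sub ((key θ hθ).1) hint4, integral_const_mul]
    have hVint : ∀ θ ∈ I, ∀ m : ℝ,
        Integrable (fun y => (a y - m) ^ 2 * Real.exp (a y * θ - Bl θ)) μ := by
      intro θ hθ m
      have heq : (fun y => (a y - m) ^ 2 * Real.exp (a y * θ - Bl θ))
          = fun y => (a y ^ 2 * Real.exp (θ * a y)
              - 2 * m * (a y * Real.exp (θ * a y))
              + m ^ 2 * Real.exp (θ * a y)) * (∫ y, Real.exp (θ * a y) ∂μ)⁻¹ :=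
        funext fun y => by simp only [hexpI θ hθ]; ring
      rw [heq]
      have hint1 : Integrable (fun y => a y ^ 2 * Real.exp (θ * a y)
          - 2 * m * (a y * Real.exp (θ * a y))) μ :=
        ((key θ hθ).2.1).sub (((key θ hθ).1).const_mul _)
      have hint2 : Integrable (fun y => (a y ^ 2 * Real.exp (θ * a y)
          - 2 * m * (a y * Real.exp (θ * a y))) + m ^ 2 * Real.exp (θ * a y)) μ :=
        hint1.add ((hL θ hθ).const_mul _)
      exact hint2.mul_const _
    have hVar : ∀ θ ∈ I,
        (∫ y, (a y - deriv Bl θ) ^ 2 * Real.exp (a y * θ - Bl θ) ∂μ)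
          = ((∫ y, a y ^ 2 * Real.exp (θ * a y) ∂μ) * (∫ y, Real.exp (θ * a y) ∂μ)
              - (∫ y, a y * Real.exp (θ * a y) ∂μ) * (∫ y, a y * Real.exp (θ * a y) ∂μ))
            / (∫ y, Real.exp (θ * a y) ∂μ) ^ 2 := by
      intro θ hθ
      rw [hcomp θ hθ _, hderiv_eq θ hθ]
      have hLne := (hLpos θ hθ).ne'
      field_simp
      rw [show (fun y => a y ^ 2 * Real.exp (a y * θ)) = fun y => a y ^ 2 * Real.exp (θ * a y)
        from funext fun y => by rw [mul_comm (a y) θ]]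
      ring
    have hb2' : ∀ θ ∈ I, HasDerivAt (deriv Bl)
        (∫ y, (a y - deriv Bl θ) ^ 2 * Real.exp (a y * θ - Bl θ) ∂μ) θ := by
      intro θ hθ
      rw [hVar θ hθ]
      exact hb2 θ hθ
    constructor
    · intro θ hθ
      exact ⟨(hbD θ hθ).differentiableAt, hb2' θ hθ,
        integral_nonneg fun y => mul_nonneg (sq_nonneg _) (Real.exp_pos _).le⟩
    · intro hna
      have hpos : ∀ θ ∈ I,
          0 < ∫ y, (a y - deriv Bl θ) ^ 2 * Real.exp (a y * θ - Bl θ) ∂μ := by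
        intro θ hθ
        have hnn : 0 ≤ ∫ y, (a y - deriv Bl θ) ^ 2 * Real.exp (a y * θ - Bl θ) ∂μ :=
          integral_nonneg fun y => mul_nonneg (sq_nonneg _) (Real.exp_pos _).le
        rcases hnn.lt_or_eq with h | h
        · exact h
        · exfalso
          have hae := (integral_eq_zero_iff_of_nonneg
            (fun y => mul_nonneg (sq_nonneg _) (Real.exp_pos _).le)
            (hVint θ hθ _)).1 h.symm
          apply hna
          refine ⟨deriv Bl θ, ?_⟩
          filter_upwards [hae] with y hy
          have hexpne : Real.exp (a y * θ - Bl θ) ≠ 0 := (Real.exp_pos _).ne'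
          have hsq : (a y - deriv Bl θ) ^ 2 = 0 := by
            rcases mul_eq_zero.1 hy with h' | h'
            · exact h'
            · exact absurd h' hexpne
          have := sq_eq_zero_iff.1 hsq
          linarith [sub_eq_zero.1 this]
      have hsm : StrictMonoOn (deriv Bl) I := by
        apply strictMonoOn_of_deriv_pos hI_conn.convex
        · intro x hx
          exact ((hb2' x hx).continuousAt).continuousWithinAt
        · intro x hx
          rw [hI_open.interior_eq] at hx
          rw [(hb2' x hx).deriv]
          exact hpos x hx
      refine ⟨hpos, hsm, ?_⟩
      intro θ₀ hθ₀ θ hθ heq0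
      rw [hcomp1 θ₀ hθ₀ _] at heq0
      have hL0 := hLpos θ₀ hθ₀
      have hz : (∫ y, a y * Real.exp (θ₀ * a y) ∂μ)
          - deriv Bl θ * (∫ y, Real.exp (θ₀ * a y) ∂μ) = 0 := by
        rcases mul_eq_zero.1 heq0 with h' | h'
        · exact h'
        · exact absurd h' (inv_ne_zero hL0.ne')
      have hmθ₀ : deriv Bl θ₀
          = (∫ y, a y * Real.exp (θ₀ * a y) ∂μ) / (∫ y, Real.exp (θ₀ * a y) ∂μ) :=
        hderiv_eq θ₀ hθ₀
      have heqd : deriv Bl θ = deriv Bl θ₀ := by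
        rw [hmθ₀]
        field_simp
        rw [show (fun y => a y * Real.exp (a y * θ₀)) = fun y => a y * Real.exp (θ₀ * a y)
          from funext fun y => by rw [mul_comm (a y) θ₀]]
        linarith
      exact hsm.injOn hθ hθ₀ heqd
end

section
/- (Inverse probability weighting under right censoring.) Let Y and Z be independent real random variables on a probability space, let ψ : ℝ → ℝ be measurable with ψ(Y) integrable, and set G(y) = Pr(Z ≥ y). Assume G(Y) > 0 almost surely. Then the random variable ψ(Y)·𝟙(Y ≤ Z)/G(Y) is integrable and E{ψ(Y)·𝟙(Y ≤ Z)/G(Y)} = E{ψ(Y)}. In particular, writing Y^c = min(Y, Z) and Δ = 𝟙(Y ≤ Z), one has E{ψ(Y^c)·Δ/G(Y^c)} = E{ψ(Y)}, so the inverse-probability-weighted estimating equation based on the censored observation (Y^c, Δ) is unbiased for the estimating equation based on the uncensored Y. -/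
open MeasureTheory ENNReal NNReal

/-- Inverse probability weighting under right censoring.  If `Y` and the
censoring variable `Z` are independent, `G(y) = Pr(Z ≥ y)`, and `G(Y) > 0` a.s., then
`ψ(Y)·𝟙(Y ≤ Z)/G(Y)` is integrable with expectation `E{ψ(Y)}`; in particular, with
`Y^c = min(Y, Z)` and `Δ = 𝟙(Y ≤ Z)`, `E{ψ(Y^c) Δ / G(Y^c)} = E{ψ(Y)}`. -/
theorem ipw_right_censoring {Ω : Type*} [MeasurableSpace Ω]
    (P : Measure Ω) [IsProbabilityMeasure P]
    (Y Z : Ω → ℝ) (hY : Measurable Y) (hZ : Measurable Z)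
    (hindep : ProbabilityTheory.IndepFun Y Z P)
    (ψ : ℝ → ℝ) (hψ : Measurable ψ)
    (hint : Integrable (fun ω => ψ (Y ω)) P)
    (G : ℝ → ℝ) (hG : ∀ y, G y = (P {ω | y ≤ Z ω}).toReal)
    (hGpos : ∀ᵐ ω ∂P, 0 < G (Y ω)) :
    Integrable (fun ω => ψ (Y ω) * (if Y ω ≤ Z ω then 1 else 0) / G (Y ω)) P ∧
    (∫ ω, ψ (Y ω) * (if Y ω ≤ Z ω then 1 else 0) / G (Y ω) ∂P) =
      (∫ ω, ψ (Y ω) ∂P) ∧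
    (∫ ω, ψ (min (Y ω) (Z ω)) * (if Y ω ≤ Z ω then 1 else 0) /
        G (min (Y ω) (Z ω)) ∂P) = ∫ ω, ψ (Y ω) ∂P := by
  set μ := P.map Y with hμ
  set ν := P.map Z with hν
  haveI : IsProbabilityMeasure μ := Measure.isProbabilityMeasure_map hY.aemeasurable
  haveI : IsProbabilityMeasure ν := Measure.isProbabilityMeasure_map hZ.aemeasurable
  -- G via ν
  have hGν : ∀ y, ν (Set.Ici y) = ENNReal.ofReal (G y) := by
    intro y
    rw [hν, Measure.map_apply hZ measurableSet_Ici, hG y]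
    have : Z ⁻¹' Set.Ici y = {ω | y ≤ Z ω} := rfl
    rw [this, ENNReal.ofReal_toReal (measure_ne_top _ _)]
  -- G is measurable (antitone)
  have hGanti : Antitone G := by
    intro a b hab
    rw [hG, hG]
    exact ENNReal.toReal_mono (measure_ne_top _ _)
      (measure_mono (fun ω h => le_trans hab h))
  have hGm : Measurable G := hGanti.measurable
  -- a.e. positivity on μ
  have hGposμ : ∀ᵐ y ∂μ, 0 < G y := by
    rw [hμ, ae_map_iff hY.aemeasurable (measurableSet_lt measurable_const hGm)]
    exact hGpos
  -- the function on the product space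
  set F : ℝ × ℝ → ℝ := fun p => ψ p.1 * (if p.1 ≤ p.2 then 1 else 0) / G p.1 with hF
  have hFm : Measurable F := by
    apply Measurable.div
    · apply Measurable.mul (hψ.comp measurable_fst)
      exact Measurable.ite (measurableSet_le measurable_fst measurable_snd)
        measurable_const measurable_const
    · exact hGm.comp measurable_fst
  have hmap : P.map (fun ω => (Y ω, Z ω)) = μ.prod ν :=
    (ProbabilityTheory.indepFun_iff_map_prod_eq_prod_map_map hY.aemeasurable
      hZ.aemeasurable).mp hindep
  -- integrability on product
  have hFint : Integrable F (μ.prod ν) := by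
    refine ⟨hFm.aestronglyMeasurable, ?_⟩
    show (∫⁻ p, (‖F p‖₊ : ℝ≥0∞) ∂(μ.prod ν)) < ⊤
    rw [lintegral_prod (fun p => (‖F p‖₊ : ℝ≥0∞)) (hFm.enorm).aemeasurable]
    have key : ∀ᵐ y ∂μ, (∫⁻ z, ‖F (y, z)‖₊ ∂ν) = ‖ψ y‖₊ := by
      filter_upwards [hGposμ] with y hy
      have : (fun z => (‖F (y, z)‖₊ : ℝ≥0∞)) =
          (Set.Ici y).indicator (fun _ => (‖ψ y / G y‖₊ : ℝ≥0∞)) := by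
        funext z
        by_cases h : y ≤ z
        · simp [hF, Set.indicator_of_mem (Set.mem_Ici.mpr h), h]
        · simp [hF, Set.indicator_of_notMem (fun hh => h (Set.mem_Ici.mp hh)), h]
      rw [this, lintegral_indicator measurableSet_Ici]
      simp only [lintegral_const, Measure.restrict_apply MeasurableSet.univ,
        Set.univ_inter]
      rw [hGν y]
      rw [← enorm_eq_nnnorm, ← enorm_eq_nnnorm, ← ofReal_norm_eq_enorm, ← ofReal_norm_eq_enorm,
        ← ENNReal.ofReal_mul (norm_nonneg _)]
      congr 1
      rw [Real.norm_eq_abs, Real.norm_eq_abs, abs_div, abs_of_pos hy,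
        div_mul_cancel₀ _ (ne_of_gt hy)]
    rw [lintegral_congr_ae key]
    have hψμ : Integrable ψ μ :=
      (integrable_map_measure hψ.aestronglyMeasurable hY.aemeasurable).mpr hint
    exact hψμ.2
  -- main computation
  have hcomp : Integrable (fun ω => F (Y ω, Z ω)) P := by
    have h2 : Integrable (F ∘ fun ω => (Y ω, Z ω)) P := by
      rw [← integrable_map_measure hFm.aestronglyMeasurable
        (hY.prodMk hZ).aemeasurable, hmap]
      exact hFint
    exact h2
  have hψint : ∫ y, ψ y ∂μ = ∫ ω, ψ (Y ω) ∂P :=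
    integral_map hY.aemeasurable hψ.aestronglyMeasurable
  have hmain : ∫ ω, F (Y ω, Z ω) ∂P = ∫ ω, ψ (Y ω) ∂P := by
    rw [← integral_map (hY.prodMk hZ).aemeasurable hFm.aestronglyMeasurable, hmap,
      integral_prod F hFint, ← hψint]
    apply integral_congr_ae
    filter_upwards [hGposμ] with y hy
    have : (fun z => F (y, z)) =
        fun z => (ψ y / G y) * (Set.Ici y).indicator (1 : ℝ → ℝ) z := by
      funext z
      by_cases h : y ≤ z
      · simp [hF, Set.indicator_of_mem (Set.mem_Ici.mpr h), h, mul_div_right_comm]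
      · simp [hF, Set.indicator_of_notMem (fun hh => h (Set.mem_Ici.mp hh)), h]
    rw [this, integral_const_mul, integral_indicator_one (measurableSet_Ici)]
    have : (ν (Set.Ici y)).toReal = G y := by
      rw [hGν y, ENNReal.toReal_ofReal hy.le]
    rw [Measure.real, this, div_mul_cancel₀ _ (ne_of_gt hy)]
  refine ⟨hcomp, hmain, ?_⟩
  rw [← hmain]
  apply integral_congr_ae
  filter_upwards with ω
  by_cases h : Y ω ≤ Z ω
  · simp [hF, h, min_eq_left h]
  · simp [hF, h]
end
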